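/- Let (Ω, P) be a probability space, f : Ω → [0,1] measurable, t < τ, events Y, Y*, C̃ = Y* ∪ {f > τ}, and C any event. Assume: P(Yᶜ ∩ Y*) = 0; P(Y* ∩ Cᶜ) = 0 and P(Y* ∩ C̃ᶜ) = 0; P(C) = P(Y) = P(C̃); P(Yᶜ ∩ C) = P(Yᶜ ∩ C̃) (equal type-1 error); P(Yᶜ) > 0, P(Cᶜ) > 0, P(C̃ᶜ) > 0; and P(Y ∩ Cᶜ) > 0, P(Y ∩ C̃ᶜ) > 0. Then P({f > t} | Yᶜ) − P({f > t} | Cᶜ) ≤ P({f > t} | Yᶜ) − P({f > t} | C̃ᶜ). -/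

import Mathlib

open MeasureTheory

/-- Real-valued probability of an event. -/
noncomputable def pr {Ω : Type*} [MeasurableSpace Ω] (μ : Measure Ω) (s : Set Ω) : ℝ :=
  (μ s).toReal

/-- Real-valued conditional probability P(A | B). -/
noncomputable def cpr {Ω : Type*} [MeasurableSpace Ω] (μ : Measure Ω) (A B : Set Ω) : ℝ :=
  pr μ (A ∩ B) / pr μ B

theorem stmt_12 {Ω : Type*} [MeasurableSpace Ω] (μ : Measure Ω) [IsProbabilityMeasure μ]
    (f : Ω → ℝ) (hf : Measurable f) (hrange : ∀ ω, f ω ∈ Set.Icc (0 : ℝ) 1)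
    (t τ : ℝ) (htτ : t < τ)
    (Y Ystar C : Set Ω) (hY : MeasurableSet Y) (hYs : MeasurableSet Ystar)
    (hC : MeasurableSet C)
    (Ctil : Set Ω) (hCtil : Ctil = Ystar ∪ {ω | τ < f ω})
    (hcc : μ (Yᶜ ∩ Ystar) = 0)
    (hnoflipC : μ (Ystar ∩ Cᶜ) = 0) (hnoflipCtil : μ (Ystar ∩ Ctilᶜ) = 0)
    (hcalC : μ C = μ Y) (hcalCtil : μ Ctil = μ Y)
    (herr1 : μ (Yᶜ ∩ C) = μ (Yᶜ ∩ Ctil))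
    (hYc : 0 < μ Yᶜ) (hCc : 0 < μ Cᶜ) (hCtilc : 0 < μ Ctilᶜ)
    (he2C : 0 < μ (Y ∩ Cᶜ)) (he2Ctil : 0 < μ (Y ∩ Ctilᶜ)) :
    cpr μ {ω | t < f ω} Yᶜ - cpr μ {ω | t < f ω} Cᶜ
      ≤ cpr μ {ω | t < f ω} Yᶜ - cpr μ {ω | t < f ω} Ctilᶜ := by
  set F : Set Ω := {ω | t < f ω} with hFdef
  have hF : MeasurableSet F := measurableSet_lt measurable_const hf
  -- equal complements measure
  have hcompl : μ Cᶜ = μ Ctilᶜ := by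
    rw [measure_compl hC (measure_ne_top _ _),
      measure_compl (by rw [hCtil]; exact hYs.union (measurableSet_lt measurable_const hf))
        (measure_ne_top _ _), hcalC, hcalCtil]
  -- key inclusion: Fᶜ ∩ Cᶜ ⊆ (Fᶜ ∩ Ctilᶜ) ∪ (Ystar ∩ Cᶜ)
  have hincl : Fᶜ ∩ Cᶜ ⊆ (Fᶜ ∩ Ctilᶜ) ∪ (Ystar ∩ Cᶜ) := by
    intro ω ⟨hωF, hωC⟩
    by_cases hs : ω ∈ Ystar
    · exact Or.inr ⟨hs, hωC⟩
    · refine Or.inl ⟨hωF, ?_⟩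
      rw [hCtil]
      rintro (h | h)
      · exact hs h
      · have h1 : ¬ t < f ω := hωF
        exact h1 (lt_trans htτ h)
  have hkey : μ (Fᶜ ∩ Cᶜ) ≤ μ (Fᶜ ∩ Ctilᶜ) := by
    calc μ (Fᶜ ∩ Cᶜ) ≤ μ ((Fᶜ ∩ Ctilᶜ) ∪ (Ystar ∩ Cᶜ)) := measure_mono hincl
      _ ≤ μ (Fᶜ ∩ Ctilᶜ) + μ (Ystar ∩ Cᶜ) := measure_union_le _ _
      _ = μ (Fᶜ ∩ Ctilᶜ) := by rw [hnoflipC, add_zero]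
  -- additivity: μ (F ∩ s) + μ (Fᶜ ∩ s) = μ s
  have hadd : ∀ s : Set Ω, μ (F ∩ s) + μ (Fᶜ ∩ s) = μ s := by
    intro s
    rw [Set.inter_comm F s, Set.inter_comm Fᶜ s, ← Set.diff_eq]
    exact measure_inter_add_diff s hF
  have hmain : μ (F ∩ Ctilᶜ) ≤ μ (F ∩ Cᶜ) := by
    have h1 := hadd Cᶜ
    have h2 := hadd Ctilᶜ
    have := hcompl
    have hne : μ (Fᶜ ∩ Ctilᶜ) ≠ ⊤ := measure_ne_top _ _
    -- from h2 : a + b = μ Ctilᶜ, h1 : c + d = μ Cᶜ, hcompl, hkey : d ≤ b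
    have : μ (F ∩ Ctilᶜ) + μ (Fᶜ ∩ Ctilᶜ) = μ (F ∩ Cᶜ) + μ (Fᶜ ∩ Cᶜ) := by
      rw [h1, h2, hcompl]
    have h3 : μ (F ∩ Ctilᶜ) + μ (Fᶜ ∩ Cᶜ) ≤ μ (F ∩ Cᶜ) + μ (Fᶜ ∩ Cᶜ) := by
      calc μ (F ∩ Ctilᶜ) + μ (Fᶜ ∩ Cᶜ) ≤ μ (F ∩ Ctilᶜ) + μ (Fᶜ ∩ Ctilᶜ) :=
            add_le_add_right hkey _
        _ = μ (F ∩ Cᶜ) + μ (Fᶜ ∩ Cᶜ) := this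
    exact ENNReal.le_of_add_le_add_right (measure_ne_top _ _) h3
  -- move to reals
  have hCc' : 0 < pr μ Cᶜ := ENNReal.toReal_pos hCc.ne' (measure_ne_top _ _)
  have hprcompl : pr μ Cᶜ = pr μ Ctilᶜ := by unfold pr; rw [hcompl]
  have hmain' : pr μ (F ∩ Ctilᶜ) ≤ pr μ (F ∩ Cᶜ) :=
    ENNReal.toReal_mono (measure_ne_top _ _) hmain
  unfold cpr
  have : pr μ (F ∩ Ctilᶜ) / pr μ Ctilᶜ ≤ pr μ (F ∩ Cᶜ) / pr μ Cᶜ := by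
    rw [← hprcompl]
    gcongr
  linarith
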